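/- Under the conditions λₙ = c₁ n^{−a}, κₙ = c₂ n^{−b}, c₂ > 0, 0 ≤ a ≤ b < 1/2, τ₀ ∈ (−1,1), and Tₙ bounded (H₀ true), the Bayes factor BF₀₁(n) = √(9nκₙ²/4 + 1)·exp{½(λₙ²/κₙ² − μₙ²/σₙ²)}·[Φ((1−τ₀−μₙ)/σₙ) − Φ((−1−τ₀−μₙ)/σₙ)]/[Φ((1−τ₀−λₙ)/κₙ) − Φ((−1−τ₀−λₙ)/κₙ)] tends to +∞ as n → ∞. -/

import Mathlib

open Real MeasureTheory Filter Topology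

/-- standard normal pdf -/
noncomputable def phi (x : ℝ) : ℝ := (Real.sqrt (2 * Real.pi))⁻¹ * Real.exp (-x ^ 2 / 2)

/-- standard normal cdf -/
noncomputable def Phi (x : ℝ) : ℝ := ∫ t in Set.Iic x, phi t

lemma phi_pos (x : ℝ) : 0 < phi x := by
  have h : 0 < Real.sqrt (2 * Real.pi) := Real.sqrt_pos.2 (by positivity)
  unfold phi
  positivity

lemma phi_eq : phi = fun x : ℝ => (Real.sqrt (2 * Real.pi))⁻¹ * Real.exp (-(1/2 : ℝ) * x ^ 2) := by
  funext x; unfold phi; rw [show -x^2/2 = -(1/2:ℝ)*x^2 by ring]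

lemma phi_integrable : Integrable phi := by
  rw [phi_eq]
  exact (integrable_exp_neg_mul_sq (by norm_num : (0:ℝ) < 1/2)).const_mul _

lemma phi_integral : ∫ x, phi x = 1 := by
  rw [phi_eq, MeasureTheory.integral_const_mul, integral_gaussian]
  rw [show π / (1/2 : ℝ) = 2 * π by ring]
  rw [inv_mul_cancel₀ (Real.sqrt_ne_zero'.2 (by positivity))]

lemma Phi_nonneg (x : ℝ) : 0 ≤ Phi x :=
  setIntegral_nonneg measurableSet_Iic fun t _ => (phi_pos t).le

lemma Phi_le_one (x : ℝ) : Phi x ≤ 1 := by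
  rw [← phi_integral]
  exact setIntegral_le_integral phi_integrable (Filter.Eventually.of_forall fun t => (phi_pos t).le)

lemma Phi_sub_pos {x y : ℝ} (h : x < y) : 0 < Phi y - Phi x := by
  have heq : Phi y - Phi x = ∫ t in x..y, phi t :=
    intervalIntegral.integral_Iic_sub_Iic phi_integrable.integrableOn phi_integrable.integrableOn
  rw [heq]
  exact intervalIntegral.intervalIntegral_pos_of_pos_on phi_integrable.intervalIntegrable (fun t _ => phi_pos t) h

lemma Phi_tendsto_one : Tendsto Phi atTop (𝓝 1) := by
  have h := tendsto_setIntegral_of_monotone (μ := volume) (f := phi)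
      (s := fun x : ℝ => Set.Iic x) (fun i => measurableSet_Iic)
      (fun i j hij => Set.Iic_subset_Iic.2 hij)
      (by rw [Set.iUnion_Iic]; exact phi_integrable.integrableOn)
  exact (by simpa [Set.iUnion_Iic, phi_integral] using h :
    Tendsto (fun i => ∫ x in Set.Iic i, phi x) atTop (𝓝 1))

lemma Phi_tendsto_zero : Tendsto Phi atBot (𝓝 0) := by
  have h := tendsto_setIntegral_of_antitone (μ := volume) (f := phi)
      (s := fun x : ℝ => Set.Iic (-x)) (fun i => measurableSet_Iic)
      (fun i j hij => Set.Iic_subset_Iic.2 (by linarith))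
      ⟨0, phi_integrable.integrableOn⟩
  have h2 : (⋂ x : ℝ, Set.Iic (-x)) = ∅ := by
    ext y
    simp only [Set.mem_iInter, Set.mem_Iic, Set.mem_empty_iff_false, iff_false, not_forall, not_le]
    exact ⟨-y + 1, by linarith⟩
  rw [h2] at h
  simp only [Measure.restrict_empty, integral_zero_measure] at h
  have h3 := h.comp tendsto_neg_atBot_atTop
  simp only [Function.comp_def, neg_neg] at h3
  exact h3


lemma rpow_succ {x : ℝ} (hx : 0 < x) (p : ℝ) : x ^ (p+1) = x ^ p * x := by
  rw [Real.rpow_add hx, Real.rpow_one]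

lemma rpow_sq {x : ℝ} (hx : 0 < x) (p : ℝ) : (x ^ p) ^ 2 = x ^ (2*p) := by
  rw [← Real.rpow_natCast (x ^ p) 2, ← Real.rpow_mul hx.le]
  congr 1
  push_cast; ring

lemma tend_rpow (p : ℝ) (hp : p < 0) : Tendsto (fun n : ℕ => (n:ℝ)^p) atTop (𝓝 0) := by
  have h := (tendsto_rpow_neg_atTop (show 0 < -p by linarith)).comp
    (tendsto_natCast_atTop_atTop (R := ℝ))
  simpa [Function.comp_def] using h

lemma aux_exp (x s t l u M : ℝ) (hx : 0 < x) (hs2 : s^2 = x) (hs0 : 0 ≤ s) (htM : |t| ≤ M)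
    (hu : 0 < u) (hcond : 4*M^2*u ≤ 9*x/4) :
    -(M^2+1) ≤ l^2*u - ((3*s/2*t + l*u)/(9*x/4+u))^2*(9*x/4+u) := by
  subst hs2
  have hM : 0 ≤ M := (abs_nonneg t).trans htM
  have hD : 0 < 9*s^2/4+u := by nlinarith
  have hid : l^2*u - ((3*s/2*t + l*u)/(9*s^2/4+u))^2*(9*s^2/4+u)
      = (l^2*u*(9*s^2/4) - 3*s*t*l*u - (9*s^2/4)*t^2) / (9*s^2/4+u) := by
    field_simp
    ring
  rw [hid, le_div_iff₀ hD]
  have ht2 : t^2 ≤ M^2 := by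
    have h := abs_le.mp htM
    exact sq_le_sq' h.1 h.2
  have h1 : (9*s^2/4)*t^2 ≤ (9*s^2/4)*M^2 := by nlinarith [sq_nonneg s]
  have h3 : 3*s*t*l*u ≤ 3*M*s*|l| * u := by
    have habs : 3*s*t*l ≤ 3*M*s*|l| := by
      have h4 : 3*s*t*l ≤ |3*s*t*l| := le_abs_self _
      have h5 : |3*s*t*l| = 3*s*(|t| * |l|) := by
        rw [abs_mul, abs_mul, abs_mul]
        rw [abs_of_nonneg (by norm_num : (0:ℝ) ≤ 3), abs_of_nonneg hs0]
        ring
      have h6 : |t| * |l| ≤ M * |l| := mul_le_mul_of_nonneg_right htM (abs_nonneg l)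
      nlinarith [hs0]
    have := mul_le_mul_of_nonneg_right habs hu.le
    linarith
  have h2 : -(9*s^2/4) ≤ l^2*u*(9*s^2/4) - 3*s*t*l*u := by
    rw [← sq_abs l]
    rcases le_or_gt (3*M*s) (9*s^2/4*|l|) with hcase | hcase
    · have A1 := mul_le_mul_of_nonneg_right hcase (mul_nonneg (abs_nonneg l) hu.le)
      linarith [A1, h3, sq_nonneg s]
    · have hpos2 : (0:ℝ) ≤ 3*M*s*u := by positivity
      have A := mul_le_mul_of_nonneg_left hcase.le hpos2
      have hint2 := mul_le_mul_of_nonneg_left hcond (show (0:ℝ) ≤ 9*s^2/4 by positivity)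
      have h7 : (9*s^2/4) * (3*M*s*|l| * u) ≤ (9*s^2/4) * (9*s^2/4) := by linarith [A, hint2]
      have h8 : 3*M*s*|l| * u ≤ 9*s^2/4 := le_of_mul_le_mul_left h7 (by linarith)
      have hp3 : (0:ℝ) ≤ |l|^2*u*(9*s^2/4) := by positivity
      linarith [hp3, h3, h8]
  linarith [h1, h2, mul_nonneg hu.le (show (0:ℝ) ≤ M^2+1 by positivity)]

theorem stmt_16 (τ₀ : ℝ) (hτ : τ₀ ∈ Set.Ioo (-1 : ℝ) 1)
    (T : ℕ → ℝ) (M : ℝ) (hT : ∀ n, |T n| ≤ M)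
    (c₁ c₂ a b : ℝ) (hc₂ : 0 < c₂) (ha : 0 ≤ a) (hab : a ≤ b) (hb : b < 1 / 2)
    (lam kap μ σ BF : ℕ → ℝ)
    (hlam : ∀ n : ℕ, lam n = c₁ * (n : ℝ) ^ (-a))
    (hkap : ∀ n : ℕ, kap n = c₂ * (n : ℝ) ^ (-b))
    (hμ : ∀ n : ℕ, μ n = ((3 * Real.sqrt n / 2) * T n + lam n / kap n ^ 2) /
        (9 * (n : ℝ) / 4 + 1 / kap n ^ 2))
    (hσ : ∀ n : ℕ, σ n = (9 * (n : ℝ) / 4 + 1 / kap n ^ 2) ^ (-(1 : ℝ) / 2))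
    (hBF : ∀ n : ℕ, BF n =
        Real.sqrt (9 * (n : ℝ) * kap n ^ 2 / 4 + 1) *
          Real.exp ((1 / 2) * (lam n ^ 2 / kap n ^ 2 - μ n ^ 2 / σ n ^ 2)) *
          ((Phi ((1 - τ₀ - μ n) / σ n) - Phi ((-1 - τ₀ - μ n) / σ n)) /
            (Phi ((1 - τ₀ - lam n) / kap n) - Phi ((-1 - τ₀ - lam n) / kap n)))) :
    Tendsto BF atTop atTop := by
  obtain ⟨hτ1, hτ2⟩ := hτ
  have hM : 0 ≤ M := (abs_nonneg (T 0)).trans (hT 0)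
  -- basic per-n facts
  have hxpos : ∀ n : ℕ, 1 ≤ n → (0:ℝ) < (n:ℝ) := by
    intro n hn
    have : (1:ℝ) ≤ (n:ℝ) := by exact_mod_cast hn
    linarith
  have hk : ∀ n : ℕ, 1 ≤ n → 0 < kap n := by
    intro n hn
    have hx := hxpos n hn
    rw [hkap]
    positivity
  have hker : ∀ n : ℕ, 1 ≤ n → 1 / kap n ^ 2 = (n:ℝ) ^ (2*b) / c₂ ^ 2 := by
    intro n hn
    have hx := hxpos n hn
    have hrp : (0:ℝ) < (n:ℝ) ^ (2*b) := Real.rpow_pos_of_pos hx _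
    rw [hkap, mul_pow, rpow_sq hx, show (2*(-b)) = -(2*b) by ring, Real.rpow_neg hx.le]
    field_simp
  have hupos : ∀ n : ℕ, 1 ≤ n → 0 < 1 / kap n ^ 2 := fun n hn =>
    one_div_pos.2 (pow_pos (hk n hn) 2)
  have hDpos : ∀ n : ℕ, 1 ≤ n → 0 < 9 * (n:ℝ) / 4 + 1 / kap n ^ 2 := by
    intro n hn
    have := hxpos n hn
    have := hupos n hn
    linarith
  have hDge : ∀ n : ℕ, 1 ≤ n → 9 * (n:ℝ) / 4 ≤ 9 * (n:ℝ) / 4 + 1 / kap n ^ 2 := by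
    intro n hn
    have := hupos n hn
    linarith
  have hσpos : ∀ n : ℕ, 1 ≤ n → 0 < σ n := by
    intro n hn
    rw [hσ]
    exact Real.rpow_pos_of_pos (hDpos n hn) _
  have hσsq : ∀ n : ℕ, 1 ≤ n → σ n ^ 2 = 1 / (9 * (n:ℝ) / 4 + 1 / kap n ^ 2) := by
    intro n hn
    have hD := hDpos n hn
    rw [hσ n, rpow_sq hD, show (2 * (-(1:ℝ)/2)) = -1 by ring, Real.rpow_neg_one]
    exact (one_div _).symm
  -- sigma tends to zero
  have hσub : ∀ᶠ n : ℕ in atTop, 0 ≤ σ n ∧ σ n ≤ (n:ℝ) ^ (-(1:ℝ)/2) := by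
    filter_upwards [eventually_ge_atTop 1] with n hn
    refine ⟨(hσpos n hn).le, ?_⟩
    have hx := hxpos n hn
    have hD := hDpos n hn
    have hle : (n:ℝ) ≤ 9 * (n:ℝ) / 4 + 1 / kap n ^ 2 := by
      have := hupos n hn; linarith
    rw [hσ n]
    exact Real.antitoneOn_rpow_Ioi_of_exponent_nonpos (by norm_num)
      (Set.mem_Ioi.2 hx) (Set.mem_Ioi.2 hD) hle
  have hσ0 : Tendsto σ atTop (𝓝 0) :=
    squeeze_zero' (hσub.mono fun n h => h.1) (hσub.mono fun n h => h.2)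
      (tend_rpow _ (by norm_num))
  -- mu tends to zero
  have hμb : ∀ᶠ n : ℕ in atTop, ‖μ n‖ ≤
      2*M/3 * (n:ℝ) ^ (-(1:ℝ)/2) + 4*|c₁|/(9*c₂^2) * (n:ℝ) ^ (2*b-a-1) := by
    filter_upwards [eventually_ge_atTop 1] with n hn
    have hx := hxpos n hn
    have hD := hDpos n hn
    have hA : |3 * Real.sqrt n / 2 * T n| ≤ 3 * Real.sqrt (n:ℝ) / 2 * M := by
      rw [abs_mul, abs_of_nonneg (by positivity : (0:ℝ) ≤ 3 * Real.sqrt n / 2)]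
      exact mul_le_mul_of_nonneg_left (hT n) (by positivity)
    have hLeq : lam n / kap n ^ 2 = c₁/c₂^2 * (n:ℝ) ^ (2*b-a) := by
      rw [div_eq_mul_one_div (lam n), hlam, hker n hn, show (2*b-a) = -a + 2*b by ring,
        Real.rpow_add hx]
      ring
    have hL : |lam n / kap n ^ 2| = |c₁|/c₂^2 * (n:ℝ) ^ (2*b-a) := by
      rw [hLeq, abs_mul, abs_of_nonneg (Real.rpow_pos_of_pos hx _).le, abs_div,
        abs_of_nonneg (by positivity : (0:ℝ) ≤ c₂^2)]
    have hnum : |3 * Real.sqrt n / 2 * T n + lam n / kap n ^ 2| ≤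
        3 * Real.sqrt (n:ℝ) / 2 * M + |c₁|/c₂^2 * (n:ℝ) ^ (2*b-a) := by
      calc |3 * Real.sqrt n / 2 * T n + lam n / kap n ^ 2|
          ≤ |3 * Real.sqrt n / 2 * T n| + |lam n / kap n ^ 2| := abs_add_le _ _
        _ ≤ _ := by rw [hL]; linarith [hA]
    have hμabs : |μ n| ≤ (3 * Real.sqrt (n:ℝ) / 2 * M + |c₁|/c₂^2 * (n:ℝ) ^ (2*b-a)) /
        (9 * (n:ℝ) / 4) := by
      rw [hμ n, abs_div, abs_of_pos hD]
      have h1 : |3 * Real.sqrt n / 2 * T n + lam n / kap n ^ 2| /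
          (9 * (n:ℝ) / 4 + 1 / kap n ^ 2) ≤
          |3 * Real.sqrt n / 2 * T n + lam n / kap n ^ 2| / (9 * (n:ℝ) / 4) :=
        div_le_div_of_nonneg_left (abs_nonneg _) (by linarith) (hDge n hn)
      have h2 : |3 * Real.sqrt n / 2 * T n + lam n / kap n ^ 2| / (9 * (n:ℝ) / 4) ≤
          (3 * Real.sqrt (n:ℝ) / 2 * M + |c₁|/c₂^2 * (n:ℝ) ^ (2*b-a)) / (9 * (n:ℝ) / 4) := by
        apply div_le_div_of_nonneg_right ?_ (by linarith)
        exact hnum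
      linarith
    have e1 : Real.sqrt (n:ℝ) / (n:ℝ) = (n:ℝ) ^ (-(1:ℝ)/2) := by
      rw [Real.sqrt_eq_rpow, show (-(1:ℝ)/2) = 1/2 - 1 by norm_num, Real.rpow_sub hx,
        Real.rpow_one]
    have e2 : (n:ℝ) ^ (2*b-a) / (n:ℝ) = (n:ℝ) ^ (2*b-a-1) := by
      rw [div_eq_iff hx.ne', ← rpow_succ hx (2*b-a-1)]
      congr 1
      ring
    have e3 : (3 * Real.sqrt (n:ℝ) / 2 * M + |c₁|/c₂^2 * (n:ℝ) ^ (2*b-a)) / (9 * (n:ℝ) / 4)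
        = 2*M/3 * (Real.sqrt (n:ℝ) / (n:ℝ)) + 4*|c₁|/(9*c₂^2) * ((n:ℝ) ^ (2*b-a) / (n:ℝ)) := by
      field_simp
      ring
    rw [Real.norm_eq_abs]
    calc |μ n| ≤ _ := hμabs
      _ = _ := by rw [e3, e1, e2]
  have hμ0 : Tendsto μ atTop (𝓝 0) := by
    apply squeeze_zero_norm' hμb
    have t1 := (tend_rpow (-(1:ℝ)/2) (by norm_num)).const_mul (2*M/3)
    have t2 := (tend_rpow (2*b-a-1) (by linarith)).const_mul (4*|c₁|/(9*c₂^2))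
    simpa using t1.add t2
  -- numerator of the Phi ratio tends to 1
  have hσW : Tendsto σ atTop (𝓝[>] 0) := by
    apply tendsto_nhdsWithin_of_tendsto_nhds_of_eventually_within _ hσ0
    filter_upwards [eventually_ge_atTop 1] with n hn
    exact hσpos n hn
  have hinv : Tendsto (fun n => (σ n)⁻¹) atTop atTop := tendsto_inv_nhdsGT_zero.comp hσW
  have hnum1 : Tendsto (fun n => 1 - τ₀ - μ n) atTop (𝓝 (1 - τ₀)) := by
    simpa using (tendsto_const_nhds (x := (1 - τ₀ : ℝ)) (f := atTop)).sub hμ0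
  have hnum2 : Tendsto (fun n => -1 - τ₀ - μ n) atTop (𝓝 (-1 - τ₀)) := by
    simpa using (tendsto_const_nhds (x := (-1 - τ₀ : ℝ)) (f := atTop)).sub hμ0
  have harg1 : Tendsto (fun n => (1 - τ₀ - μ n) / σ n) atTop atTop := by
    simp only [div_eq_mul_inv]
    exact hnum1.pos_mul_atTop (by linarith) hinv
  have harg2 : Tendsto (fun n => (-1 - τ₀ - μ n) / σ n) atTop atBot := by
    simp only [div_eq_mul_inv]
    exact hnum2.neg_mul_atTop (by linarith) hinv
  have hNum : Tendsto (fun n => Phi ((1 - τ₀ - μ n) / σ n) - Phi ((-1 - τ₀ - μ n) / σ n))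
      atTop (𝓝 1) := by
    have h := (Phi_tendsto_one.comp harg1).sub (Phi_tendsto_zero.comp harg2)
    simpa [Function.comp_def] using h
  have hNumev : ∀ᶠ n : ℕ in atTop,
      1/2 ≤ Phi ((1 - τ₀ - μ n) / σ n) - Phi ((-1 - τ₀ - μ n) / σ n) :=
    hNum.eventually_const_le (by norm_num)
  -- the smallness condition for the exponent bound
  have hFev : ∀ᶠ n : ℕ in atTop, 4*M^2/c₂^2 * (n:ℝ) ^ (2*b-1) ≤ 9/4 := by
    have h := (tend_rpow (2*b-1) (by linarith)).const_mul (4*M^2/c₂^2)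
    simp only [mul_zero] at h
    exact h.eventually_le_const (by norm_num)
  -- the lower bound function
  have hC : 0 < 3*c₂/2 * Real.exp (-(M^2+1)/2) * (1/2) := by positivity
  have hL : Tendsto (fun n : ℕ => 3*c₂/2 * Real.exp (-(M^2+1)/2) * (1/2) *
      (n:ℝ) ^ ((1:ℝ)/2 - b)) atTop atTop := by
    apply Tendsto.const_mul_atTop hC
    exact (tendsto_rpow_atTop (by linarith)).comp (tendsto_natCast_atTop_atTop (R := ℝ))
  apply tendsto_atTop_mono' atTop _ hL
  filter_upwards [eventually_ge_atTop 1, hFev, hNumev] with n hn hF hNumn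
  have hx := hxpos n hn
  have hD := hDpos n hn
  have hkn := hk n hn
  -- exponent bound
  have hcondn : 4*M^2*(1/kap n ^ 2) ≤ 9*(n:ℝ)/4 := by
    have hsplit : (n:ℝ) ^ (2*b) = (n:ℝ) ^ (2*b-1) * (n:ℝ) := by
      rw [← rpow_succ hx (2*b-1)]
      congr 1
      ring
    calc 4*M^2*(1/kap n ^ 2) = 4*M^2/c₂^2 * (n:ℝ) ^ (2*b-1) * (n:ℝ) := by
          rw [hker n hn, hsplit]; ring
      _ ≤ 9/4 * (n:ℝ) := mul_le_mul_of_nonneg_right hF hx.le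
      _ = 9*(n:ℝ)/4 := by ring
  have hXbound : -(M^2+1) ≤ lam n ^ 2 / kap n ^ 2 - μ n ^ 2 / σ n ^ 2 := by
    rw [hσsq n hn, one_div, div_inv_eq_mul, hμ n, div_eq_mul_one_div (lam n ^ 2) (kap n ^ 2),
      div_eq_mul_one_div (lam n) (kap n ^ 2)]
    exact aux_exp (n:ℝ) (Real.sqrt n) (T n) (lam n) (1 / kap n ^ 2) M hx
      (Real.sq_sqrt hx.le) (Real.sqrt_nonneg _) (hT n) (hupos n hn) hcondn
  have hE : Real.exp (-(M^2+1)/2) ≤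
      Real.exp ((1/2) * (lam n ^ 2 / kap n ^ 2 - μ n ^ 2 / σ n ^ 2)) := by
    apply Real.exp_le_exp.2
    linarith
  -- sqrt factor bound
  have hSlow : 3*c₂/2 * (n:ℝ) ^ ((1:ℝ)/2 - b) ≤
      Real.sqrt (9 * (n:ℝ) * kap n ^ 2 / 4 + 1) := by
    apply Real.le_sqrt_of_sq_le
    have hkk : kap n ^ 2 = c₂^2 * (n:ℝ) ^ (-(2*b)) := by
      rw [hkap, mul_pow, rpow_sq hx, show (2*(-b)) = -(2*b) by ring]
    have e3 : (3*c₂/2 * (n:ℝ) ^ ((1:ℝ)/2 - b))^2 = 9*c₂^2/4 * (n:ℝ) ^ (1-2*b) := by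
      rw [mul_pow, rpow_sq hx, show (2*((1:ℝ)/2-b)) = 1-2*b by ring]
      ring
    have e4 : 9 * (n:ℝ) * kap n ^ 2 / 4 = 9*c₂^2/4 * (n:ℝ) ^ (1-2*b) := by
      rw [hkk, show (1-2*b : ℝ) = 1 + (-(2*b)) by ring, Real.rpow_add hx, Real.rpow_one]
      ring
    rw [e3, e4]
    linarith
  -- ratio bound
  have hden_lt : (-1 - τ₀ - lam n) / kap n < (1 - τ₀ - lam n) / kap n := by
    apply div_lt_div_of_pos_right (by linarith) hkn
  have hDenpos : 0 < Phi ((1 - τ₀ - lam n) / kap n) - Phi ((-1 - τ₀ - lam n) / kap n) :=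
    Phi_sub_pos hden_lt
  have hDenle : Phi ((1 - τ₀ - lam n) / kap n) - Phi ((-1 - τ₀ - lam n) / kap n) ≤ 1 := by
    linarith [Phi_le_one ((1 - τ₀ - lam n) / kap n), Phi_nonneg ((-1 - τ₀ - lam n) / kap n)]
  have hR : 1/2 ≤ (Phi ((1 - τ₀ - μ n) / σ n) - Phi ((-1 - τ₀ - μ n) / σ n)) /
      (Phi ((1 - τ₀ - lam n) / kap n) - Phi ((-1 - τ₀ - lam n) / kap n)) := by
    set N := Phi ((1 - τ₀ - μ n) / σ n) - Phi ((-1 - τ₀ - μ n) / σ n) with hN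
    set De := Phi ((1 - τ₀ - lam n) / kap n) - Phi ((-1 - τ₀ - lam n) / kap n) with hDe
    have hN0 : 0 ≤ N := le_trans (by norm_num) hNumn
    have h1 : N * De ≤ N * 1 := mul_le_mul_of_nonneg_left hDenle hN0
    have h2 : N ≤ N / De := (le_div_iff₀ hDenpos).2 (by linarith)
    linarith
  -- combine
  rw [hBF n]
  set S := Real.sqrt (9 * (n:ℝ) * kap n ^ 2 / 4 + 1) with hS
  set E := Real.exp ((1/2) * (lam n ^ 2 / kap n ^ 2 - μ n ^ 2 / σ n ^ 2)) with hE'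
  set R := (Phi ((1 - τ₀ - μ n) / σ n) - Phi ((-1 - τ₀ - μ n) / σ n)) /
      (Phi ((1 - τ₀ - lam n) / kap n) - Phi ((-1 - τ₀ - lam n) / kap n)) with hR'
  have hs0 : (0:ℝ) ≤ 3*c₂/2 * (n:ℝ) ^ ((1:ℝ)/2 - b) := by positivity
  have step1 : 3*c₂/2 * (n:ℝ) ^ ((1:ℝ)/2 - b) * Real.exp (-(M^2+1)/2) ≤ S * E :=
    mul_le_mul hSlow hE (Real.exp_pos _).le (Real.sqrt_nonneg _)
  have hSE : (0:ℝ) ≤ S * E := mul_nonneg (Real.sqrt_nonneg _) (Real.exp_pos _).le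
  calc 3*c₂/2 * Real.exp (-(M^2+1)/2) * (1/2) * (n:ℝ) ^ ((1:ℝ)/2 - b)
      = 3*c₂/2 * (n:ℝ) ^ ((1:ℝ)/2 - b) * Real.exp (-(M^2+1)/2) * (1/2) := by ring
    _ ≤ S * E * (1/2) := mul_le_mul_of_nonneg_right step1 (by norm_num)
    _ ≤ S * E * R := mul_le_mul_of_nonneg_left hR hSE
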